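/- arXiv:1310.1004 — 4 statements merged into one kernel-verified Lean document; each statement's English description precedes it below -/
import Mathlib

section
/- Let n ≥ 3, let φ be a permutation of I = {1,…,n}, and let k, l be two distinct blocks of the Möbius n-pair 𝔐_{(n,φ)}. Then |k ∩ l| ∈ {0, 1, 2, n−2}. If k and l are both A-blocks, or both B-blocks, then |k ∩ l| = n−2. Otherwise k = A_i and l = B_j for some i, j ∈ I, and: (i) |A_i ∩ B_j| = 0 iff φ(j) = i = j; (ii) |A_i ∩ B_j| = 1 iff (φ(j) = i and i ≠ j) or (φ(j) ≠ i and i = j); (iii) |A_i ∩ B_j| = 2 iff φ(j) ≠ i and i ≠ j. -/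
abbrev MPoint (n : ℕ) := Fin n ⊕ Fin n

/-- The block `A_i = (A \ {a_i}) ∪ {b_i}`. -/
def Ablock (n : ℕ) (i : Fin n) : Set (MPoint n) :=
  Sum.inl '' {j | j ≠ i} ∪ {Sum.inr i}

/-- The block `B_i = (B \ {b_i}) ∪ {a_{φ(i)}}`. -/
def Bblock (n : ℕ) (φ : Equiv.Perm (Fin n)) (i : Fin n) : Set (MPoint n) :=
  Sum.inr '' {j | j ≠ i} ∪ {Sum.inl (φ i)}

def ABlocks (n : ℕ) : Set (Set (MPoint n)) := Set.range (Ablock n)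

def BBlocks (n : ℕ) (φ : Equiv.Perm (Fin n)) : Set (Set (MPoint n)) := Set.range (Bblock n φ)

/-- The blocks of the Möbius `n`-pair `𝔐_{(n,φ)}`; its point set is all of `MPoint n`. -/
def MBlocks (n : ℕ) (φ : Equiv.Perm (Fin n)) : Set (Set (MPoint n)) :=
  ABlocks n ∪ BBlocks n φ

lemma inl_mem_A (n : ℕ) (i a : Fin n) : (Sum.inl a : MPoint n) ∈ Ablock n i ↔ a ≠ i := by
  simp [Ablock]

lemma inr_mem_A (n : ℕ) (i a : Fin n) : (Sum.inr a : MPoint n) ∈ Ablock n i ↔ a = i := by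
  simp [Ablock]

lemma inl_mem_B (n : ℕ) (φ : Equiv.Perm (Fin n)) (i a : Fin n) :
    (Sum.inl a : MPoint n) ∈ Bblock n φ i ↔ a = φ i := by
  simp [Bblock]

lemma inr_mem_B (n : ℕ) (φ : Equiv.Perm (Fin n)) (i a : Fin n) :
    (Sum.inr a : MPoint n) ∈ Bblock n φ i ↔ a ≠ i := by
  simp [Bblock]

lemma mem_AB (n : ℕ) (φ : Equiv.Perm (Fin n)) (i j : Fin n) (x : MPoint n) :
    x ∈ Ablock n i ∩ Bblock n φ j ↔
      (x = Sum.inl (φ j) ∧ φ j ≠ i) ∨ (x = Sum.inr i ∧ i ≠ j) := by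
  cases x with
  | inl a => simp [Set.mem_inter_iff, inl_mem_A, inl_mem_B]; aesop
  | inr a => simp [Set.mem_inter_iff, inr_mem_A, inr_mem_B]; aesop

lemma AB_ncard (n : ℕ) (φ : Equiv.Perm (Fin n)) (i j : Fin n) :
    (Ablock n i ∩ Bblock n φ j).ncard =
      (if φ j = i then 0 else 1) + (if i = j then 0 else 1) := by
  rcases eq_or_ne (φ j) i with h1 | h1 <;> rcases eq_or_ne i j with h2 | h2
  · rw [if_pos h1, if_pos h2]
    have : Ablock n i ∩ Bblock n φ j = ∅ := by
      ext x; rw [mem_AB]; simp [h1, h2]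
    simp [this]
  · rw [if_pos h1, if_neg h2]
    have : Ablock n i ∩ Bblock n φ j = {Sum.inr i} := by
      ext x; rw [mem_AB]; simp [h1, h2]
    simp [this]
  · rw [if_neg h1, if_pos h2]
    have : Ablock n i ∩ Bblock n φ j = {Sum.inl (φ j)} := by
      ext x; rw [mem_AB]; simp [h1, h2]
      exact fun _ hc => h1 (hc.trans h2.symm)
    simp [this]
  · rw [if_neg h1, if_neg h2]
    have : Ablock n i ∩ Bblock n φ j = {Sum.inl (φ j), Sum.inr i} := by
      ext x; rw [mem_AB]; simp [h1, h2]
    rw [this, Set.ncard_pair (by simp)]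

lemma compl_ncard (n : ℕ) (i i' : Fin n) (h : i ≠ i') :
    ({a : Fin n | a ≠ i ∧ a ≠ i'}).ncard = n - 2 := by
  have heq : {a : Fin n | a ≠ i ∧ a ≠ i'} = (({i, i'} : Set (Fin n)))ᶜ := by
    ext a; simp [not_or]
  have h2 : ({i, i'} : Set (Fin n)).ncard = 2 := Set.ncard_pair h
  have := Set.ncard_add_ncard_compl ({i, i'} : Set (Fin n))
  rw [heq]
  simp [Set.ncard_univ] at this
  omega

lemma AA_ncard (n : ℕ) (i i' : Fin n) (h : i ≠ i') :
    (Ablock n i ∩ Ablock n i').ncard = n - 2 := by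
  have heq : Ablock n i ∩ Ablock n i' = Sum.inl '' {a | a ≠ i ∧ a ≠ i'} := by
    ext x; cases x with
    | inl a => simp [Set.mem_inter_iff, inl_mem_A]
    | inr a =>
      simp only [Set.mem_inter_iff, inr_mem_A, Set.mem_image, Set.mem_setOf_eq]
      constructor
      · rintro ⟨rfl, rfl⟩; exact absurd rfl h
      · rintro ⟨b, _, hb⟩; exact absurd hb (by simp)
  rw [heq, Set.ncard_image_of_injective _ Sum.inl_injective, compl_ncard n i i' h]

lemma BB_ncard (n : ℕ) (φ : Equiv.Perm (Fin n)) (i i' : Fin n) (h : i ≠ i') :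
    (Bblock n φ i ∩ Bblock n φ i').ncard = n - 2 := by
  have heq : Bblock n φ i ∩ Bblock n φ i' = Sum.inr '' {a | a ≠ i ∧ a ≠ i'} := by
    ext x; cases x with
    | inl a =>
      simp only [Set.mem_inter_iff, inl_mem_B, Set.mem_image, Set.mem_setOf_eq]
      constructor
      · rintro ⟨rfl, h2⟩; exact absurd (φ.injective h2) h
      · rintro ⟨b, _, hb⟩; exact absurd hb (by simp)
    | inr a => simp [Set.mem_inter_iff, inr_mem_B]
  rw [heq, Set.ncard_image_of_injective _ Sum.inr_injective, compl_ncard n i i' h]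

lemma Ablock_inj (n : ℕ) : Function.Injective (Ablock n) := by
  intro i i' h
  have : (Sum.inr i : MPoint n) ∈ Ablock n i' := h ▸ (by simp [Ablock])
  simpa [Ablock] using this

lemma Bblock_inj (n : ℕ) (φ : Equiv.Perm (Fin n)) : Function.Injective (Bblock n φ) := by
  intro i i' h
  by_contra hne
  have : (Sum.inr i : MPoint n) ∈ Bblock n φ i := h ▸ (by simp [Bblock, hne])
  simp [Bblock] at this

lemma A_ne_B (n : ℕ) (hn : 3 ≤ n) (φ : Equiv.Perm (Fin n)) (i j : Fin n) :
    Ablock n i ≠ Bblock n φ j := by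
  intro h
  have key : ∀ a : Fin n, a ≠ i → a = φ j := by
    intro a ha
    have : (Sum.inl a : MPoint n) ∈ Bblock n φ j := h ▸ (by simp [Ablock, ha])
    simpa [Bblock] using this
  have hsub : (Finset.univ : Finset (Fin n)) ⊆ {i, φ j} := by
    intro a _
    rcases eq_or_ne a i with rfl | ha
    · simp
    · simp [key a ha]
  have := Finset.card_le_card hsub
  have h2 : ({i, φ j} : Finset (Fin n)).card ≤ 2 := Finset.card_insert_le _ _ |>.trans (by simp)
  simp at this
  omega

lemma part4 (n : ℕ) (φ : Equiv.Perm (Fin n)) (i j : Fin n) :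
    ((Ablock n i ∩ Bblock n φ j).ncard = 0 ↔ (φ j = i ∧ i = j)) ∧
    ((Ablock n i ∩ Bblock n φ j).ncard = 1 ↔
      ((φ j = i ∧ i ≠ j) ∨ (φ j ≠ i ∧ i = j))) ∧
    ((Ablock n i ∩ Bblock n φ j).ncard = 2 ↔ (φ j ≠ i ∧ i ≠ j)) := by
  have h := AB_ncard n φ i j
  rcases eq_or_ne (φ j) i with h1 | h1 <;> rcases eq_or_ne i j with h2 | h2
  · rw [if_pos h1, if_pos h2] at h
    refine ⟨?_, ?_, ?_⟩ <;> (rw [h]; simp [h1, h2])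
  · rw [if_pos h1, if_neg h2] at h
    refine ⟨?_, ?_, ?_⟩ <;> (rw [h]; simp [h1, h2])
  · rw [if_neg h1, if_pos h2] at h
    subst h2
    refine ⟨?_, ?_, ?_⟩ <;> (rw [h]; simp [h1])
  · rw [if_neg h1, if_neg h2] at h
    refine ⟨?_, ?_, ?_⟩ <;> (rw [h]; simp [h1, h2])

theorem stmt0 (n : ℕ) (hn : 3 ≤ n) (φ : Equiv.Perm (Fin n))
    (k l : Set (MPoint n)) (hk : k ∈ MBlocks n φ) (hl : l ∈ MBlocks n φ) (hkl : k ≠ l) :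
    (k ∩ l).ncard ∈ ({0, 1, 2, n - 2} : Set ℕ) ∧
    (((k ∈ ABlocks n ∧ l ∈ ABlocks n) ∨ (k ∈ BBlocks n φ ∧ l ∈ BBlocks n φ)) →
      (k ∩ l).ncard = n - 2) ∧
    (¬((k ∈ ABlocks n ∧ l ∈ ABlocks n) ∨ (k ∈ BBlocks n φ ∧ l ∈ BBlocks n φ)) →
      ∃ i j : Fin n, (k = Ablock n i ∧ l = Bblock n φ j) ∨ (k = Bblock n φ j ∧ l = Ablock n i)) ∧
    (∀ i j : Fin n,
      ((Ablock n i ∩ Bblock n φ j).ncard = 0 ↔ (φ j = i ∧ i = j)) ∧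
      ((Ablock n i ∩ Bblock n φ j).ncard = 1 ↔
        ((φ j = i ∧ i ≠ j) ∨ (φ j ≠ i ∧ i = j))) ∧
      ((Ablock n i ∩ Bblock n φ j).ncard = 2 ↔ (φ j ≠ i ∧ i ≠ j))) := by
  rcases hk with ⟨i, rfl⟩ | ⟨i, rfl⟩ <;> rcases hl with ⟨j, rfl⟩ | ⟨j, rfl⟩
  · have hij : i ≠ j := fun h => hkl (by rw [h])
    refine ⟨?_, fun _ => AA_ncard n i j hij, fun hcon => absurd (Or.inl ⟨⟨i, rfl⟩, ⟨j, rfl⟩⟩) hcon,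
      fun i j => part4 n φ i j⟩
    simp only [Set.mem_insert_iff, Set.mem_singleton_iff]
    exact Or.inr (Or.inr (Or.inr (AA_ncard n i j hij)))
  · refine ⟨?_, ?_, fun _ => ⟨i, j, Or.inl ⟨rfl, rfl⟩⟩, fun i j => part4 n φ i j⟩
    · simp only [Set.mem_insert_iff, Set.mem_singleton_iff]
      rw [AB_ncard]
      split_ifs <;> simp
    · rintro (⟨-, ⟨j', hj'⟩⟩ | ⟨⟨i', hi'⟩, -⟩)
      · exact absurd hj' (A_ne_B n hn φ j' j)
      · exact absurd hi'.symm (A_ne_B n hn φ i i')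
  · refine ⟨?_, ?_, fun _ => ⟨j, i, Or.inr ⟨rfl, rfl⟩⟩, fun i j => part4 n φ i j⟩
    · simp only [Set.mem_insert_iff, Set.mem_singleton_iff]
      rw [Set.inter_comm, AB_ncard]
      split_ifs <;> simp
    · rintro (⟨⟨i', hi'⟩, -⟩ | ⟨-, ⟨j', hj'⟩⟩)
      · exact absurd hi' (A_ne_B n hn φ i' i)
      · exact absurd hj'.symm (A_ne_B n hn φ j j')
  · have hij : i ≠ j := fun h => hkl (by rw [h])
    refine ⟨?_, fun _ => BB_ncard n φ i j hij,
      fun hcon => absurd (Or.inr ⟨⟨i, rfl⟩, ⟨j, rfl⟩⟩) hcon, fun i j => part4 n φ i j⟩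
    simp only [Set.mem_insert_iff, Set.mem_singleton_iff]
    exact Or.inr (Or.inr (Or.inr (BB_ncard n φ i j hij)))
end

section
/- The Möbius configuration 𝔐_{(4,id)} admits exactly 3 special decompositions, i.e., exactly 3 ways (as unordered pairs of simplices) to present its point set as two complementary mutually inscribed 4-simplices, each of which is distinct from S_A and S_B. -/
set_option maxRecDepth 2000000
set_option maxHeartbeats 4000000
set_option synthInstance.maxSize 2000
set_option synthInstance.maxHeartbeats 400000

/-- A "simplex" of a decomposition: a pair (points, blocks). -/
abbrev MSimplex (n : ℕ) := Set (MPoint n) × Set (Set (MPoint n))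

def SimplexA (n : ℕ) : MSimplex n := (Set.range Sum.inl, ABlocks n)

def SimplexB (n : ℕ) (φ : Equiv.Perm (Fin n)) : MSimplex n := (Set.range Sum.inr, BBlocks n φ)

/-- A decomposition of 𝔐_{(n,φ)} into two complementary mutually inscribed n-simplices. -/
def IsDecomp (n : ℕ) (φ : Equiv.Perm (Fin n)) (S₁ S₂ : MSimplex n) : Prop :=
  S₁.1 ∪ S₂.1 = Set.univ ∧ Disjoint S₁.1 S₂.1 ∧ S₁.1.ncard = n ∧ S₂.1.ncard = n ∧
  S₁.2 ∪ S₂.2 = MBlocks n φ ∧ Disjoint S₁.2 S₂.2 ∧ S₁.2.ncard = n ∧ S₂.2.ncard = n ∧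
  (∀ l ∈ S₁.2, (l ∩ S₁.1).ncard = n - 1 ∧ (l ∩ S₂.1).ncard = 1) ∧
  (∀ l ∈ S₂.2, (l ∩ S₂.1).ncard = n - 1 ∧ (l ∩ S₁.1).ncard = 1) ∧
  (∀ p ∈ S₁.1, {l ∈ S₁.2 | p ∈ l}.ncard = n - 1 ∧ {l ∈ S₂.2 | p ∈ l}.ncard = 1) ∧
  (∀ p ∈ S₂.1, {l ∈ S₂.2 | p ∈ l}.ncard = n - 1 ∧ {l ∈ S₁.2 | p ∈ l}.ncard = 1)

/-- A special decomposition: one in which both simplices differ from S_A and S_B. -/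
def IsSpecialDecomp (n : ℕ) (φ : Equiv.Perm (Fin n)) (S₁ S₂ : MSimplex n) : Prop :=
  IsDecomp n φ S₁ S₂ ∧
  S₁ ≠ SimplexA n ∧ S₁ ≠ SimplexB n φ ∧ S₂ ≠ SimplexA n ∧ S₂ ≠ SimplexB n φ

/-! ### Auxiliary Finset machinery -/

/-- Finset version of the blocks, indexed by `MPoint 4` itself
(`inl i` is the `A`-block `A_i`, `inr i` the `B`-block `B_i`). -/
def blkF : MPoint 4 → Finset (MPoint 4)
  | .inl i => (Finset.univ.erase i).image Sum.inl ∪ {Sum.inr i}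
  | .inr i => (Finset.univ.erase i).image Sum.inr ∪ {Sum.inl i}

def bset (i : MPoint 4) : Set (MPoint 4) := ↑(blkF i)

lemma blkF_inj : Function.Injective blkF := by decide

lemma bset_inj : Function.Injective bset :=
  fun _ _ h => blkF_inj (Finset.coe_inj.mp h)

lemma Ablock_eq (i : Fin 4) : Ablock 4 i = bset (.inl i) := by
  ext x
  simp [Ablock, bset, blkF]

lemma Bblock_eq (i : Fin 4) : Bblock 4 1 i = bset (.inr i) := by
  ext x
  simp [Bblock, bset, blkF]

lemma MBlocks_eq : MBlocks 4 1 = Set.range bset := by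
  ext s
  constructor
  · rintro (⟨i, rfl⟩ | ⟨i, rfl⟩)
    · exact ⟨.inl i, (Ablock_eq i).symm⟩
    · exact ⟨.inr i, (Bblock_eq i).symm⟩
  · rintro ⟨i | i, rfl⟩
    · exact Or.inl ⟨i, Ablock_eq i⟩
    · exact Or.inr ⟨i, Bblock_eq i⟩

def pA : Finset (MPoint 4) := {.inl 0, .inl 1, .inr 2, .inr 3}
def pB : Finset (MPoint 4) := {.inl 0, .inl 2, .inr 1, .inr 3}
def pC : Finset (MPoint 4) := {.inl 0, .inl 3, .inr 1, .inr 2}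
def fA : Finset (MPoint 4) := Finset.univ.image Sum.inl
def fB : Finset (MPoint 4) := Finset.univ.image Sum.inr

lemma rangeInl : Set.range (Sum.inl : Fin 4 → MPoint 4) = ↑fA := by
  rw [fA, Finset.coe_image, Finset.coe_univ, Set.image_univ]

lemma rangeInr : Set.range (Sum.inr : Fin 4 → MPoint 4) = ↑fB := by
  rw [fB, Finset.coe_image, Finset.coe_univ, Set.image_univ]

lemma ABlocks_eq : ABlocks 4 = bset '' ↑fA := by
  rw [fA, Finset.coe_image, Finset.coe_univ, Set.image_univ, ← Set.range_comp]
  ext s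
  constructor
  · rintro ⟨i, rfl⟩; exact ⟨i, (Ablock_eq i).symm⟩
  · rintro ⟨i, rfl⟩; exact ⟨i, Ablock_eq i⟩

lemma BBlocks_eq : BBlocks 4 1 = bset '' ↑fB := by
  rw [fB, Finset.coe_image, Finset.coe_univ, Set.image_univ, ← Set.range_comp]
  ext s
  constructor
  · rintro ⟨i, rfl⟩; exact ⟨i, (Bblock_eq i).symm⟩
  · rintro ⟨i, rfl⟩; exact ⟨i, Bblock_eq i⟩

/-- The simplex with point set `P` and blocks indexed by `T`. -/
def mkS (P T : Finset (MPoint 4)) : MSimplex 4 := (↑P, bset '' ↑T)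

lemma ncard_bsetImage (T : Finset (MPoint 4)) : (bset '' ↑T).ncard = T.card := by
  rw [Set.ncard_image_of_injective _ bset_inj, Set.ncard_coe_finset]

lemma sep_bsetImage (T : Finset (MPoint 4)) (p : MPoint 4) :
    {l ∈ bset '' ↑T | p ∈ l} = bset '' ↑(T.filter (fun i => p ∈ blkF i)) := by
  ext l
  constructor
  · rintro ⟨⟨i, hi, rfl⟩, hp⟩
    exact ⟨i, by simpa using ⟨hi, hp⟩, rfl⟩
  · rintro ⟨i, hi, rfl⟩
    simp only [Finset.coe_filter, Set.mem_setOf_eq] at hi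
    exact ⟨⟨i, hi.1, rfl⟩, hi.2⟩

lemma card_MPoint : Fintype.card (MPoint 4) = 8 := by decide

lemma isDecomp_of (P T : Finset (MPoint 4)) (h1 : P.card = 4) (h2 : T.card = 4)
    (h3 : ∀ i ∈ T, (blkF i ∩ P).card = 3 ∧ (blkF i ∩ Pᶜ).card = 1)
    (h4 : ∀ i ∈ Tᶜ, (blkF i ∩ Pᶜ).card = 3 ∧ (blkF i ∩ P).card = 1)
    (h5 : ∀ p ∈ P, (T.filter (fun i => p ∈ blkF i)).card = 3 ∧
      (Tᶜ.filter (fun i => p ∈ blkF i)).card = 1)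
    (h6 : ∀ p ∈ Pᶜ, (Tᶜ.filter (fun i => p ∈ blkF i)).card = 3 ∧
      (T.filter (fun i => p ∈ blkF i)).card = 1) :
    IsDecomp 4 1 (mkS P T) (mkS Pᶜ Tᶜ) := by
  refine ⟨?_, ?_, ?_, ?_, ?_, ?_, ?_, ?_, ?_, ?_, ?_, ?_⟩
  · show (↑P : Set (MPoint 4)) ∪ ↑(Pᶜ) = Set.univ
    rw [← Finset.coe_union, Finset.union_compl, Finset.coe_univ]
  · exact Finset.disjoint_coe.mpr disjoint_compl_right
  · show (↑P : Set (MPoint 4)).ncard = 4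
    rw [Set.ncard_coe_finset]; exact h1
  · show (↑(Pᶜ) : Set (MPoint 4)).ncard = 4
    rw [Set.ncard_coe_finset, Finset.card_compl, card_MPoint, h1]
  · show bset '' ↑T ∪ bset '' ↑(Tᶜ) = MBlocks 4 1
    rw [← Set.image_union, ← Finset.coe_union, Finset.union_compl, Finset.coe_univ,
      Set.image_univ, MBlocks_eq]
  · exact (Set.disjoint_image_iff bset_inj).mpr
      (Finset.disjoint_coe.mpr disjoint_compl_right)
  · show (bset '' ↑T).ncard = 4
    rw [ncard_bsetImage]; exact h2
  · show (bset '' ↑(Tᶜ)).ncard = 4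
    rw [ncard_bsetImage, Finset.card_compl, card_MPoint, h2]
  · rintro l ⟨i, hi, rfl⟩
    have hi' : i ∈ T := hi
    constructor
    · show (bset i ∩ ↑P).ncard = 4 - 1
      rw [bset, ← Finset.coe_inter, Set.ncard_coe_finset]
      exact (h3 i hi').1
    · show (bset i ∩ ↑(Pᶜ)).ncard = 1
      rw [bset, ← Finset.coe_inter, Set.ncard_coe_finset]
      exact (h3 i hi').2
  · rintro l ⟨i, hi, rfl⟩
    have hi' : i ∈ Tᶜ := hi
    constructor
    · show (bset i ∩ ↑(Pᶜ)).ncard = 4 - 1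
      rw [bset, ← Finset.coe_inter, Set.ncard_coe_finset]
      exact (h4 i hi').1
    · show (bset i ∩ ↑P).ncard = 1
      rw [bset, ← Finset.coe_inter, Set.ncard_coe_finset]
      exact (h4 i hi').2
  · intro p hp
    have hp' : p ∈ P := hp
    constructor
    · rw [show (mkS P T).2 = bset '' ↑T from rfl, sep_bsetImage, ncard_bsetImage]
      exact (h5 p hp').1
    · rw [show (mkS Pᶜ Tᶜ).2 = bset '' ↑(Tᶜ) from rfl, sep_bsetImage, ncard_bsetImage]
      exact (h5 p hp').2
  · intro p hp
    have hp' : p ∈ Pᶜ := hp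
    constructor
    · rw [show (mkS Pᶜ Tᶜ).2 = bset '' ↑(Tᶜ) from rfl, sep_bsetImage, ncard_bsetImage]
      exact (h6 p hp').1
    · rw [show (mkS P T).2 = bset '' ↑T from rfl, sep_bsetImage, ncard_bsetImage]
      exact (h6 p hp').2

lemma ne_simplexA (P T : Finset (MPoint 4)) (h : P ≠ fA) : mkS P T ≠ SimplexA 4 := by
  intro he
  apply h
  have h1 : (mkS P T).1 = (SimplexA 4).1 := congrArg Prod.fst he
  rw [show (mkS P T).1 = ↑P from rfl, show (SimplexA 4).1 = Set.range Sum.inl from rfl,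
    rangeInl] at h1
  exact Finset.coe_inj.mp h1

lemma ne_simplexB (P T : Finset (MPoint 4)) (h : P ≠ fB) : mkS P T ≠ SimplexB 4 1 := by
  intro he
  apply h
  have h1 : (mkS P T).1 = (SimplexB 4 1).1 := congrArg Prod.fst he
  rw [show (mkS P T).1 = ↑P from rfl, show (SimplexB 4 1).1 = Set.range Sum.inr from rfl,
    rangeInr] at h1
  exact Finset.coe_inj.mp h1

lemma key : ∀ P ∈ (Finset.univ : Finset (MPoint 4)).powersetCard 4,
    ∀ T ∈ (Finset.univ : Finset (MPoint 4)).powersetCard 4,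
    ((∀ i ∈ T, (blkF i ∩ P).card = 3) ∧ (∀ i ∈ Tᶜ, (blkF i ∩ Pᶜ).card = 3)) →
    ((T = Pᶜ ∧ (P = pA ∨ P = pAᶜ ∨ P = pB ∨ P = pBᶜ ∨ P = pC ∨ P = pCᶜ)) ∨
    ((P = fA ∧ T = fA) ∨ (P = fB ∧ T = fB))) := by decide

lemma forward {S₁ S₂ : MSimplex 4} (h : IsSpecialDecomp 4 1 S₁ S₂) :
    ∃ P : Finset (MPoint 4),
      (P = pA ∨ P = pAᶜ ∨ P = pB ∨ P = pBᶜ ∨ P = pC ∨ P = pCᶜ) ∧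
      S₁ = mkS P Pᶜ ∧ S₂ = mkS Pᶜ P := by
  classical
  obtain ⟨⟨h1, h2, h3, h4, h5, h6, h7, h8, h9, h10, -, -⟩, hA, hB, -, -⟩ := h
  set P : Finset (MPoint 4) := (Set.toFinite S₁.1).toFinset with hPdef
  have hP : (↑P : Set (MPoint 4)) = S₁.1 := Set.Finite.coe_toFinset _
  have hS21 : S₂.1 = (↑(Pᶜ) : Set (MPoint 4)) := by
    rw [Finset.coe_compl, hP]
    apply subset_antisymm
    · intro x hx
      exact Set.disjoint_left.mp h2.symm hx
    · intro x hx
      rcases (h1 ▸ Set.mem_univ x : x ∈ S₁.1 ∪ S₂.1) with hh | hh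
      · exact absurd hh hx
      · exact hh
  set T : Finset (MPoint 4) := Finset.univ.filter (fun i => bset i ∈ S₁.2) with hTdef
  have memT : ∀ i, i ∈ T ↔ bset i ∈ S₁.2 := by
    intro i; simp [hTdef]
  have hT : S₁.2 = bset '' ↑T := by
    ext l
    constructor
    · intro hl
      have hm : l ∈ S₁.2 ∪ S₂.2 := Or.inl hl
      rw [h5, MBlocks_eq] at hm
      obtain ⟨i, rfl⟩ := hm
      exact ⟨i, (memT i).mpr hl, rfl⟩
    · rintro ⟨i, hi, rfl⟩
      exact (memT i).mp hi
  have hT2 : S₂.2 = bset '' ↑(Tᶜ) := by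
    ext l
    constructor
    · intro hl
      have hm : l ∈ S₁.2 ∪ S₂.2 := Or.inr hl
      rw [h5, MBlocks_eq] at hm
      obtain ⟨i, rfl⟩ := hm
      refine ⟨i, ?_, rfl⟩
      rw [Finset.coe_compl]
      intro hi
      exact Set.disjoint_left.mp h6 ((memT i).mp hi) hl
    · rintro ⟨i, hi, rfl⟩
      rw [Finset.coe_compl] at hi
      have hm : bset i ∈ MBlocks 4 1 := MBlocks_eq ▸ ⟨i, rfl⟩
      rw [← h5] at hm
      rcases hm with hm | hm
      · exact absurd ((memT i).mpr hm) hi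
      · exact hm
  have hPc : P.card = 4 := by
    rw [← Set.ncard_coe_finset, hP]; exact h3
  have hTc : T.card = 4 := by
    rw [← ncard_bsetImage, ← hT]; exact h7
  have c1 : ∀ i ∈ T, (blkF i ∩ P).card = 3 := by
    intro i hi
    have := (h9 _ ((memT i).mp hi)).1
    rw [← hP, bset, ← Finset.coe_inter, Set.ncard_coe_finset] at this
    exact this
  have c2 : ∀ i ∈ Tᶜ, (blkF i ∩ Pᶜ).card = 3 := by
    intro i hi
    have hmem : bset i ∈ S₂.2 := hT2 ▸ ⟨i, hi, rfl⟩
    have := (h10 _ hmem).1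
    rw [hS21, bset, ← Finset.coe_inter, Set.ncard_coe_finset] at this
    exact this
  have hkey := key P (Finset.mem_powersetCard_univ.mpr hPc) T
    (Finset.mem_powersetCard_univ.mpr hTc) ⟨c1, c2⟩
  rcases hkey with ⟨hTP, hP6⟩ | ⟨hPf, hTf⟩ | ⟨hPf, hTf⟩
  · refine ⟨P, hP6, ?_, ?_⟩
    · exact Prod.ext hP.symm (by rw [hT, hTP]; rfl)
    · refine Prod.ext hS21 ?_
      rw [hT2, hTP, compl_compl]; rfl
  · exfalso
    apply hA
    refine Prod.ext ?_ ?_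
    · rw [← hP, hPf, show (SimplexA 4).1 = Set.range Sum.inl from rfl, rangeInl]
    · rw [hT, hTf, show (SimplexA 4).2 = ABlocks 4 from rfl, ABlocks_eq]
  · exfalso
    apply hB
    refine Prod.ext ?_ ?_
    · rw [← hP, hPf, show (SimplexB 4 1).1 = Set.range Sum.inr from rfl, rangeInr]
    · rw [hT, hTf, show (SimplexB 4 1).2 = BBlocks 4 1 from rfl, BBlocks_eq]

lemma special_mk (P : Finset (MPoint 4))
    (h0 : P = pA ∨ P = pB ∨ P = pC) :
    IsSpecialDecomp 4 1 (mkS P Pᶜ) (mkS Pᶜ P) := by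
  have hd : IsDecomp 4 1 (mkS P Pᶜ) (mkS Pᶜ P) := by
    have := isDecomp_of P Pᶜ
      (by rcases h0 with rfl | rfl | rfl <;> decide)
      (by rcases h0 with rfl | rfl | rfl <;> decide)
      (by rcases h0 with rfl | rfl | rfl <;> decide)
      (by rcases h0 with rfl | rfl | rfl <;> decide)
      (by rcases h0 with rfl | rfl | rfl <;> decide)
      (by rcases h0 with rfl | rfl | rfl <;> decide)
    rwa [compl_compl] at this
  refine ⟨hd, ne_simplexA _ _ ?_, ne_simplexB _ _ ?_, ne_simplexA _ _ ?_, ne_simplexB _ _ ?_⟩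
  all_goals rcases h0 with rfl | rfl | rfl <;> decide

lemma mkS_ne {P Q : Finset (MPoint 4)} (T U : Finset (MPoint 4)) (h : P ≠ Q) :
    mkS P T ≠ mkS Q U :=
  fun he => h (Finset.coe_inj.mp (congrArg Prod.fst he))

/-- 𝔐_{(4,id)} admits exactly 3 special decompositions, counted as unordered pairs
of simplices. -/
theorem stmt4 :
    {D : Set (MSimplex 4) |
      ∃ S₁ S₂ : MSimplex 4, IsSpecialDecomp 4 1 S₁ S₂ ∧ D = {S₁, S₂}}.ncard = 3 := by
  have hset : {D : Set (MSimplex 4) |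
      ∃ S₁ S₂ : MSimplex 4, IsSpecialDecomp 4 1 S₁ S₂ ∧ D = {S₁, S₂}} =
      {({mkS pA pAᶜ, mkS pAᶜ pA} : Set (MSimplex 4)),
       ({mkS pB pBᶜ, mkS pBᶜ pB} : Set (MSimplex 4)),
       ({mkS pC pCᶜ, mkS pCᶜ pC} : Set (MSimplex 4))} := by
    ext D
    simp only [Set.mem_setOf_eq, Set.mem_insert_iff, Set.mem_singleton_iff]
    constructor
    · rintro ⟨S₁, S₂, h, rfl⟩
      obtain ⟨P, hP6, rfl, rfl⟩ := forward h
      rcases hP6 with rfl | rfl | rfl | rfl | rfl | rfl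
      · exact Or.inl rfl
      · exact Or.inl (by rw [compl_compl]; exact Set.pair_comm _ _)
      · exact Or.inr (Or.inl rfl)
      · exact Or.inr (Or.inl (by rw [compl_compl]; exact Set.pair_comm _ _))
      · exact Or.inr (Or.inr rfl)
      · exact Or.inr (Or.inr (by rw [compl_compl]; exact Set.pair_comm _ _))
    · rintro (rfl | rfl | rfl)
      · exact ⟨_, _, special_mk pA (Or.inl rfl), rfl⟩
      · exact ⟨_, _, special_mk pB (Or.inr (Or.inl rfl)), rfl⟩
      · exact ⟨_, _, special_mk pC (Or.inr (Or.inr rfl)), rfl⟩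
  rw [hset]
  apply Set.ncard_eq_three.mpr
  refine ⟨_, _, _, ?_, ?_, ?_, rfl⟩
  · intro h
    have hm : mkS pA pAᶜ ∈ ({mkS pB pBᶜ, mkS pBᶜ pB} : Set (MSimplex 4)) := by
      rw [← h]; exact Or.inl rfl
    rcases hm with hm | hm
    · exact mkS_ne _ _ (by decide) hm
    · exact mkS_ne _ _ (by decide) hm
  · intro h
    have hm : mkS pA pAᶜ ∈ ({mkS pC pCᶜ, mkS pCᶜ pC} : Set (MSimplex 4)) := by
      rw [← h]; exact Or.inl rfl
    rcases hm with hm | hm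
    · exact mkS_ne _ _ (by decide) hm
    · exact mkS_ne _ _ (by decide) hm
  · intro h
    have hm : mkS pB pBᶜ ∈ ({mkS pC pCᶜ, mkS pCᶜ pC} : Set (MSimplex 4)) := by
      rw [← h]; exact Or.inl rfl
    rcases hm with hm | hm
    · exact mkS_ne _ _ (by decide) hm
    · exact mkS_ne _ _ (by decide) hm
end

section
/- Let n ≥ 4, let φ be a permutation of I = {1,…,n}, and let S_1, S_2 be the two simplices of a special decomposition of 𝔐_{(n,φ)}. Then for each t = 1,2, the blocks of S_t consist of exactly two A-blocks and exactly two B-blocks (in particular n = 4). -/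
section helpers

variable {n : ℕ} {φ : Equiv.Perm (Fin n)}

lemma inl_mem_Ablock {j i : Fin n} : Sum.inl j ∈ Ablock n i ↔ j ≠ i := by
  simp [Ablock]

lemma inr_mem_Ablock {j i : Fin n} : Sum.inr j ∈ Ablock n i ↔ j = i := by
  simp [Ablock]

lemma inr_mem_Bblock {j i : Fin n} : Sum.inr j ∈ Bblock n φ i ↔ j ≠ i := by
  simp [Bblock]

lemma inl_mem_Bblock {j i : Fin n} : Sum.inl j ∈ Bblock n φ i ↔ j = φ i := by
  simp [Bblock]

lemma Ablock_injective : Function.Injective (Ablock n) := by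
  intro i j hij
  have h : Sum.inr i ∈ Ablock n j := hij ▸ inr_mem_Ablock.mpr rfl
  exact inr_mem_Ablock.mp h

lemma Bblock_injective : Function.Injective (Bblock n φ) := by
  intro i j hij
  by_contra hne
  have h1 : Sum.inr j ∈ Bblock n φ i := inr_mem_Bblock.mpr (Ne.symm hne)
  rw [hij] at h1
  exact (inr_mem_Bblock.mp h1) rfl

lemma ncard_ABlocks : (ABlocks n).ncard = n := by
  rw [ABlocks, ← Set.image_univ, Set.ncard_image_of_injective _ Ablock_injective,
    Set.ncard_univ, Nat.card_eq_fintype_card, Fintype.card_fin]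

lemma ncard_BBlocks : (BBlocks n φ).ncard = n := by
  rw [BBlocks, ← Set.image_univ, Set.ncard_image_of_injective _ Bblock_injective,
    Set.ncard_univ, Nat.card_eq_fintype_card, Fintype.card_fin]

lemma ncard_range_inl : (Set.range (Sum.inl : Fin n → MPoint n)).ncard = n := by
  rw [← Set.image_univ, Set.ncard_image_of_injective _ Sum.inl_injective,
    Set.ncard_univ, Nat.card_eq_fintype_card, Fintype.card_fin]

lemma ncard_range_inr : (Set.range (Sum.inr : Fin n → MPoint n)).ncard = n := by
  rw [← Set.image_univ, Set.ncard_image_of_injective _ Sum.inr_injective,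
    Set.ncard_univ, Nat.card_eq_fintype_card, Fintype.card_fin]

lemma core {l Q : Set (MPoint n)} {f : Fin n → MPoint n}
    (hf : Function.Injective f) (i : Fin n) (hl : ∀ j, j ≠ i → f j ∈ l)
    (h1 : (l ∩ Q).ncard = 1) :
    ({j | f j ∈ Q} \ {i}).ncard ≤ 1 := by
  have hsub : f '' ({j | f j ∈ Q} \ {i}) ⊆ l ∩ Q := by
    rintro _ ⟨j, ⟨hjQ, hji⟩, rfl⟩
    exact ⟨hl j (by simpa using hji), hjQ⟩
  have h2 := Set.ncard_le_ncard hsub (Set.toFinite _)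
  rwa [Set.ncard_image_of_injective _ hf, h1] at h2

lemma core_le_two {l Q : Set (MPoint n)} {f : Fin n → MPoint n}
    (hf : Function.Injective f) (i : Fin n) (hl : ∀ j, j ≠ i → f j ∈ l)
    (h1 : (l ∩ Q).ncard = 1) :
    {j | f j ∈ Q}.ncard ≤ 2 := by
  have h2 := core hf i hl h1
  have hsub : {j | f j ∈ Q} ⊆ insert i ({j | f j ∈ Q} \ {i}) := by
    intro j hj
    by_cases hji : j = i
    · exact Or.inl hji
    · exact Or.inr ⟨hj, hji⟩
  calc {j | f j ∈ Q}.ncard ≤ (insert i ({j | f j ∈ Q} \ {i})).ncard :=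
        Set.ncard_le_ncard hsub (Set.toFinite _)
    _ ≤ ({j | f j ∈ Q} \ {i}).ncard + 1 := Set.ncard_insert_le _ _
    _ ≤ 2 := by omega

lemma core_mem {l Q : Set (MPoint n)} {f : Fin n → MPoint n}
    (hf : Function.Injective f) (i : Fin n) (hl : ∀ j, j ≠ i → f j ∈ l)
    (h1 : (l ∩ Q).ncard = 1) (hT : 2 ≤ {j | f j ∈ Q}.ncard) : f i ∈ Q := by
  by_contra hi
  have heq : {j | f j ∈ Q} \ {i} = {j | f j ∈ Q} := by
    ext j
    simp only [Set.mem_diff, Set.mem_setOf_eq, Set.mem_singleton_iff, and_iff_left_iff_imp]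
    rintro hj rfl
    exact hi hj
  have h2 := core hf i hl h1
  rw [heq] at h2
  omega

lemma not_sub_AB (hn : 4 ≤ n) {P : Set (MPoint n)} {L : Set (Set (MPoint n))}
    (hP : P.ncard = n) (hL : L.ncard = n)
    (hpt : ∀ p ∈ P, {l ∈ L | p ∈ l}.ncard = n - 1)
    (hne : (P, L) ≠ SimplexA n) : ¬ L ⊆ ABlocks n := by
  intro hsub
  have hLA : L = ABlocks n :=
    Set.eq_of_subset_of_ncard_le hsub (by rw [hL, ncard_ABlocks]) (Set.toFinite _)
  have hPsub : P ⊆ Set.range Sum.inl := by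
    rintro p hp
    rcases p with j | i
    · exact ⟨j, rfl⟩
    · exfalso
      have h1 := hpt _ hp
      have hsub2 : {l ∈ L | Sum.inr i ∈ l} ⊆ {Ablock n i} := by
        rintro l ⟨hlL, hil⟩
        obtain ⟨k, rfl⟩ := hsub hlL
        rw [inr_mem_Ablock.mp hil]
        rfl
      have h2 := Set.ncard_le_ncard hsub2 (Set.toFinite _)
      rw [h1, Set.ncard_singleton] at h2
      omega
  have hPeq : P = Set.range Sum.inl :=
    Set.eq_of_subset_of_ncard_le hPsub (by rw [hP, ncard_range_inl]) (Set.toFinite _)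
  exact hne (Prod.ext hPeq hLA)

lemma not_sub_BB (hn : 4 ≤ n) {P : Set (MPoint n)} {L : Set (Set (MPoint n))}
    (hP : P.ncard = n) (hL : L.ncard = n)
    (hpt : ∀ p ∈ P, {l ∈ L | p ∈ l}.ncard = n - 1)
    (hne : (P, L) ≠ SimplexB n φ) : ¬ L ⊆ BBlocks n φ := by
  intro hsub
  have hLB : L = BBlocks n φ :=
    Set.eq_of_subset_of_ncard_le hsub (by rw [hL, ncard_BBlocks]) (Set.toFinite _)
  have hPsub : P ⊆ Set.range Sum.inr := by
    rintro p hp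
    rcases p with j | i
    · exfalso
      have h1 := hpt _ hp
      have hsub2 : {l ∈ L | Sum.inl j ∈ l} ⊆ {Bblock n φ (φ.symm j)} := by
        rintro l ⟨hlL, hjl⟩
        obtain ⟨k, rfl⟩ := hsub hlL
        have hk : j = φ k := inl_mem_Bblock.mp hjl
        rw [show k = φ.symm j by rw [hk]; simp]
        rfl
      have h2 := Set.ncard_le_ncard hsub2 (Set.toFinite _)
      rw [h1, Set.ncard_singleton] at h2
      omega
    · exact ⟨i, rfl⟩
  have hPeq : P = Set.range Sum.inr :=
    Set.eq_of_subset_of_ncard_le hPsub (by rw [hP, ncard_range_inr]) (Set.toFinite _)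
  exact hne (Prod.ext hPeq hLB)

lemma compl_pair {α : Type*} [Fintype α] (s t : Set α) (h : ∀ x, x ∈ t ↔ x ∉ s) :
    s.ncard + t.ncard = Fintype.card α := by
  have ht : t = sᶜ := Set.ext fun x => (h x)
  rw [ht, Set.ncard_add_ncard_compl, Nat.card_eq_fintype_card]

end helpers

/-- In a special decomposition each simplex has exactly two A-blocks and two B-blocks
(in particular n = 4). -/
theorem stmt6 (n : ℕ) (hn : 4 ≤ n) (φ : Equiv.Perm (Fin n)) (S₁ S₂ : MSimplex n)
    (h : IsSpecialDecomp n φ S₁ S₂) :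
    n = 4 ∧
    (S₁.2 ∩ ABlocks n).ncard = 2 ∧ (S₁.2 ∩ BBlocks n φ).ncard = 2 ∧
    (S₂.2 ∩ ABlocks n).ncard = 2 ∧ (S₂.2 ∩ BBlocks n φ).ncard = 2 := by
  obtain ⟨⟨hPu, hPd, hP1, hP2, hLu, hLd, hL1, hL2, hb1, hb2, hp1, hp2⟩, hnA1, hnB1, hnA2, hnB2⟩ := h
  have hLsub1 : S₁.2 ⊆ MBlocks n φ := hLu ▸ Set.subset_union_left
  have hLsub2 : S₂.2 ⊆ MBlocks n φ := hLu ▸ Set.subset_union_right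
  -- each family of blocks contains both an A-block and a B-block
  have hexA1 : ∃ i, Ablock n i ∈ S₁.2 := by
    by_contra hc
    push_neg at hc
    refine not_sub_BB hn hP1 hL1 (fun p hp => (hp1 p hp).1) hnB1 ?_
    intro l hl
    rcases hLsub1 hl with hA | hB
    · obtain ⟨i, rfl⟩ := hA; exact absurd hl (hc i)
    · exact hB
  have hexB1 : ∃ i, Bblock n φ i ∈ S₁.2 := by
    by_contra hc
    push_neg at hc
    refine not_sub_AB hn hP1 hL1 (fun p hp => (hp1 p hp).1) hnA1 ?_
    intro l hl
    rcases hLsub1 hl with hA | hB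
    · exact hA
    · obtain ⟨i, rfl⟩ := hB; exact absurd hl (hc i)
  have hexA2 : ∃ i, Ablock n i ∈ S₂.2 := by
    by_contra hc
    push_neg at hc
    refine not_sub_BB hn hP2 hL2 (fun p hp => (hp2 p hp).1) hnB2 ?_
    intro l hl
    rcases hLsub2 hl with hA | hB
    · obtain ⟨i, rfl⟩ := hA; exact absurd hl (hc i)
    · exact hB
  have hexB2 : ∃ i, Bblock n φ i ∈ S₂.2 := by
    by_contra hc
    push_neg at hc
    refine not_sub_AB hn hP2 hL2 (fun p hp => (hp2 p hp).1) hnA2 ?_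
    intro l hl
    rcases hLsub2 hl with hA | hB
    · exact hA
    · obtain ⟨i, rfl⟩ := hB; exact absurd hl (hc i)
  obtain ⟨iA1, hiA1⟩ := hexA1
  obtain ⟨iB1, hiB1⟩ := hexB1
  obtain ⟨iA2, hiA2⟩ := hexA2
  obtain ⟨iB2, hiB2⟩ := hexB2
  -- points: P₂ is the complement of P₁
  have hmemP : ∀ p : MPoint n, p ∈ S₂.1 ↔ p ∉ S₁.1 := by
    intro p
    have hall : p ∈ S₁.1 ∪ S₂.1 := by rw [hPu]; trivial
    constructor
    · intro h2 h1; exact Set.disjoint_left.mp hPd h1 h2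
    · intro h1
      rcases hall with hx | hx
      · exact absurd hx h1
      · exact hx
  -- counts of inl/inr points in each part
  have hTA : {j : Fin n | Sum.inl j ∈ S₁.1}.ncard + {j : Fin n | Sum.inl j ∈ S₂.1}.ncard = n := by
    have := compl_pair {j : Fin n | Sum.inl j ∈ S₁.1} {j : Fin n | Sum.inl j ∈ S₂.1}
      (fun j => hmemP (Sum.inl j))
    simpa using this
  have hTB : {j : Fin n | Sum.inr j ∈ S₁.1}.ncard + {j : Fin n | Sum.inr j ∈ S₂.1}.ncard = n := by
    have := compl_pair {j : Fin n | Sum.inr j ∈ S₁.1} {j : Fin n | Sum.inr j ∈ S₂.1}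
      (fun j => hmemP (Sum.inr j))
    simpa using this
  have hbA2 : {j : Fin n | Sum.inl j ∈ S₂.1}.ncard ≤ 2 :=
    core_le_two Sum.inl_injective iA1 (fun j hj => inl_mem_Ablock.mpr hj) (hb1 _ hiA1).2
  have hbB2 : {j : Fin n | Sum.inr j ∈ S₂.1}.ncard ≤ 2 :=
    core_le_two Sum.inr_injective iB1 (fun j hj => inr_mem_Bblock.mpr hj) (hb1 _ hiB1).2
  have hbA1 : {j : Fin n | Sum.inl j ∈ S₁.1}.ncard ≤ 2 :=
    core_le_two Sum.inl_injective iA2 (fun j hj => inl_mem_Ablock.mpr hj) (hb2 _ hiA2).2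
  have hbB1 : {j : Fin n | Sum.inr j ∈ S₁.1}.ncard ≤ 2 :=
    core_le_two Sum.inr_injective iB2 (fun j hj => inr_mem_Bblock.mpr hj) (hb2 _ hiB2).2
  have hn4 : n = 4 := by omega
  have heA1 : 2 ≤ {j : Fin n | Sum.inl j ∈ S₁.1}.ncard := by omega
  have heA2 : 2 ≤ {j : Fin n | Sum.inl j ∈ S₂.1}.ncard := by omega
  have heB1 : 2 ≤ {j : Fin n | Sum.inr j ∈ S₁.1}.ncard := by omega
  have heB2 : 2 ≤ {j : Fin n | Sum.inr j ∈ S₂.1}.ncard := by omega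
  -- index sets of blocks in each part are contained in two-element sets
  have hsA1 : {i : Fin n | Ablock n i ∈ S₁.2} ⊆ {j : Fin n | Sum.inl j ∈ S₂.1} := by
    intro i hi
    exact core_mem Sum.inl_injective i (fun j hj => inl_mem_Ablock.mpr hj) (hb1 _ hi).2 heA2
  have hsA2 : {i : Fin n | Ablock n i ∈ S₂.2} ⊆ {j : Fin n | Sum.inl j ∈ S₁.1} := by
    intro i hi
    exact core_mem Sum.inl_injective i (fun j hj => inl_mem_Ablock.mpr hj) (hb2 _ hi).2 heA1
  have hsB1 : {i : Fin n | Bblock n φ i ∈ S₁.2} ⊆ {j : Fin n | Sum.inr j ∈ S₂.1} := by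
    intro i hi
    exact core_mem Sum.inr_injective i (fun j hj => inr_mem_Bblock.mpr hj) (hb1 _ hi).2 heB2
  have hsB2 : {i : Fin n | Bblock n φ i ∈ S₂.2} ⊆ {j : Fin n | Sum.inr j ∈ S₁.1} := by
    intro i hi
    exact core_mem Sum.inr_injective i (fun j hj => inr_mem_Bblock.mpr hj) (hb2 _ hi).2 heB1
  have hcA1 : {i : Fin n | Ablock n i ∈ S₁.2}.ncard ≤ 2 :=
    le_trans (Set.ncard_le_ncard hsA1 (Set.toFinite _)) (by omega)
  have hcA2 : {i : Fin n | Ablock n i ∈ S₂.2}.ncard ≤ 2 :=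
    le_trans (Set.ncard_le_ncard hsA2 (Set.toFinite _)) (by omega)
  have hcB1 : {i : Fin n | Bblock n φ i ∈ S₁.2}.ncard ≤ 2 :=
    le_trans (Set.ncard_le_ncard hsB1 (Set.toFinite _)) (by omega)
  have hcB2 : {i : Fin n | Bblock n φ i ∈ S₂.2}.ncard ≤ 2 :=
    le_trans (Set.ncard_le_ncard hsB2 (Set.toFinite _)) (by omega)
  -- blocks: L₂ is the complement of L₁ inside MBlocks
  have hmemL : ∀ l ∈ MBlocks n φ, (l ∈ S₂.2 ↔ l ∉ S₁.2) := by
    intro l hl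
    have hall : l ∈ S₁.2 ∪ S₂.2 := by rw [hLu]; exact hl
    constructor
    · intro h2 h1; exact Set.disjoint_left.mp hLd h1 h2
    · intro h1
      rcases hall with hx | hx
      · exact absurd hx h1
      · exact hx
  have hsumA : {i : Fin n | Ablock n i ∈ S₁.2}.ncard + {i : Fin n | Ablock n i ∈ S₂.2}.ncard = n := by
    have := compl_pair {i : Fin n | Ablock n i ∈ S₁.2} {i : Fin n | Ablock n i ∈ S₂.2}
      (fun i => hmemL (Ablock n i) (Or.inl ⟨i, rfl⟩))
    simpa using this
  have hsumB : {i : Fin n | Bblock n φ i ∈ S₁.2}.ncard + {i : Fin n | Bblock n φ i ∈ S₂.2}.ncard = n := by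
    have := compl_pair {i : Fin n | Bblock n φ i ∈ S₁.2} {i : Fin n | Bblock n φ i ∈ S₂.2}
      (fun i => hmemL (Bblock n φ i) (Or.inr ⟨i, rfl⟩))
    simpa using this
  -- express the intersections as images
  have hfA1 : S₁.2 ∩ ABlocks n = Ablock n '' {i | Ablock n i ∈ S₁.2} := by
    ext l
    constructor
    · rintro ⟨hl, i, rfl⟩; exact ⟨i, hl, rfl⟩
    · rintro ⟨i, hi, rfl⟩; exact ⟨hi, i, rfl⟩
  have hfA2 : S₂.2 ∩ ABlocks n = Ablock n '' {i | Ablock n i ∈ S₂.2} := by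
    ext l
    constructor
    · rintro ⟨hl, i, rfl⟩; exact ⟨i, hl, rfl⟩
    · rintro ⟨i, hi, rfl⟩; exact ⟨hi, i, rfl⟩
  have hfB1 : S₁.2 ∩ BBlocks n φ = Bblock n φ '' {i | Bblock n φ i ∈ S₁.2} := by
    ext l
    constructor
    · rintro ⟨hl, i, rfl⟩; exact ⟨i, hl, rfl⟩
    · rintro ⟨i, hi, rfl⟩; exact ⟨hi, i, rfl⟩
  have hfB2 : S₂.2 ∩ BBlocks n φ = Bblock n φ '' {i | Bblock n φ i ∈ S₂.2} := by
    ext l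
    constructor
    · rintro ⟨hl, i, rfl⟩; exact ⟨i, hl, rfl⟩
    · rintro ⟨i, hi, rfl⟩; exact ⟨hi, i, rfl⟩
  refine ⟨hn4, ?_, ?_, ?_, ?_⟩
  · rw [hfA1, Set.ncard_image_of_injective _ Ablock_injective]; omega
  · rw [hfB1, Set.ncard_image_of_injective _ Bblock_injective]; omega
  · rw [hfA2, Set.ncard_image_of_injective _ Ablock_injective]; omega
  · rw [hfB2, Set.ncard_image_of_injective _ Bblock_injective]; omega
end

section
/- Let φ, ψ be permutations of I = {1,…,n} and let f be an isomorphism mapping 𝔐_{(n,φ)} onto 𝔐_{(n,ψ)}. Assume that either n = 4 and both φ ≠ id and ψ ≠ id contain no cycle of length 2, or n ≥ 5. Then there is a permutation α of I such that either f(B_i) = B_{α(i)} for each i ∈ I, or f(B_i) = A_{α(i)} for each i ∈ I. (i) If f(B_i) = B_{α(i)} for each i, then f(b_i) = b_{α(i)}, f(A_i) = A_{α(i)}, and f(a_i) = a_{α(i)} for each i ∈ I. (ii) If f(B_i) = A_{α(i)} for each i, then f(b_i) = a_{α(i)}, f(A_i) = B_{ψ⁻¹(α(i))}, and f(a_i)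 = b_{ψ⁻¹(α(i))} for each i ∈ I. Furthermore, in both cases α ∘ φ = ψ ∘ α. -/
section basic
variable {n : ℕ} {φ ψ : Equiv.Perm (Fin n)}

@[simp] lemma mem_Ablock_inl {k i : Fin n} : (Sum.inl k : MPoint n) ∈ Ablock n i ↔ k ≠ i := by
  simp [Ablock]

@[simp] lemma mem_Ablock_inr {k i : Fin n} : (Sum.inr k : MPoint n) ∈ Ablock n i ↔ k = i := by
  simp [Ablock]

@[simp] lemma mem_Bblock_inl {k i : Fin n} : (Sum.inl k : MPoint n) ∈ Bblock n φ i ↔ k = φ i := by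
  simp [Bblock]

@[simp] lemma mem_Bblock_inr {k i : Fin n} : (Sum.inr k : MPoint n) ∈ Bblock n φ i ↔ k ≠ i := by
  simp [Bblock]

lemma exists_two_ne (hn : 4 ≤ n) (a b : Fin n) :
    ∃ c d : Fin n, c ≠ d ∧ c ≠ a ∧ c ≠ b ∧ d ≠ a ∧ d ≠ b := by
  have hcard : 1 < (({a, b} : Finset (Fin n))ᶜ).card := by
    rw [Finset.card_compl, Fintype.card_fin]
    have h2 : ({a, b} : Finset (Fin n)).card ≤ 2 :=
      le_trans (Finset.card_insert_le a {b}) (by simp)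
    omega
  obtain ⟨c, hc, d, hd, hcd⟩ := Finset.one_lt_card.mp hcard
  simp only [Finset.mem_compl, Finset.mem_insert, Finset.mem_singleton, not_or] at hc hd
  exact ⟨c, d, hcd, hc.1, hc.2, hd.1, hd.2⟩

lemma Ablock_inj_s12 {i j : Fin n} (h : Ablock n i = Ablock n j) : i = j := by
  have := h ▸ (mem_Ablock_inr.mpr rfl : (Sum.inr i : MPoint n) ∈ Ablock n i)
  exact mem_Ablock_inr.mp this

lemma Bblock_inj_s12 {i j : Fin n} (h : Bblock n φ i = Bblock n φ j) : i = j := by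
  by_contra hne
  have : (Sum.inr j : MPoint n) ∈ Bblock n φ i := mem_Bblock_inr.mpr (Ne.symm hne)
  rw [h] at this
  exact (mem_Bblock_inr.mp this) rfl

lemma Ablock_ne_Bblock (hn : 4 ≤ n) {i j : Fin n} : Ablock n i ≠ Bblock n φ j := by
  intro h
  obtain ⟨c, d, hcd, hci, -, hdi, -⟩ := exists_two_ne hn i i
  have hc : (Sum.inl c : MPoint n) ∈ Bblock n φ j := h ▸ mem_Ablock_inl.mpr hci
  have hd : (Sum.inl d : MPoint n) ∈ Bblock n φ j := h ▸ mem_Ablock_inl.mpr hdi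
  exact hcd ((mem_Bblock_inl.mp hc).trans (mem_Bblock_inl.mp hd).symm)

lemma Ablock_mem : Ablock n i ∈ MBlocks n φ := Or.inl ⟨i, rfl⟩
lemma Bblock_mem : Bblock n φ i ∈ MBlocks n φ := Or.inr ⟨i, rfl⟩

/-- no point lies on two distinct A-blocks and two distinct B-blocks -/
lemma twoA_twoB {q : MPoint n} {i i' j j' : Fin n} (hii : i ≠ i') (hjj : j ≠ j')
    (h1 : q ∈ Ablock n i) (h2 : q ∈ Ablock n i') (h3 : q ∈ Bblock n ψ j)
    (h4 : q ∈ Bblock n ψ j') : False := by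
  cases q with
  | inl x =>
    rw [mem_Bblock_inl] at h3 h4
    exact hjj (ψ.injective (h3 ▸ h4 ▸ rfl))
  | inr x =>
    rw [mem_Ablock_inr] at h1 h2
    exact hii (h1 ▸ h2 ▸ rfl)

lemma mem_two_A {q : MPoint n} {i i' : Fin n} (hii : i ≠ i')
    (h1 : q ∈ Ablock n i) (h2 : q ∈ Ablock n i') : ∃ x, q = Sum.inl x ∧ x ≠ i ∧ x ≠ i' := by
  cases q with
  | inl x => exact ⟨x, rfl, mem_Ablock_inl.mp h1, mem_Ablock_inl.mp h2⟩
  | inr x =>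
    rw [mem_Ablock_inr] at h1 h2
    exact absurd (h1 ▸ h2 ▸ rfl) hii

lemma mem_two_B {q : MPoint n} {j j' : Fin n} (hjj : j ≠ j')
    (h1 : q ∈ Bblock n ψ j) (h2 : q ∈ Bblock n ψ j') : ∃ x, q = Sum.inr x ∧ x ≠ j ∧ x ≠ j' := by
  cases q with
  | inl x =>
    rw [mem_Bblock_inl] at h1 h2
    exact absurd (ψ.injective (h1 ▸ h2 ▸ rfl)) hjj
  | inr x => exact ⟨x, rfl, mem_Bblock_inr.mp h1, mem_Bblock_inr.mp h2⟩

end basic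

section main
variable {n : ℕ} {φ ψ : Equiv.Perm (Fin n)}

open Equiv Equiv.Perm in
lemma two_mem_cycleType_of_swap {a b : Fin n}
    (hab : a ≠ b) (h1 : φ a = b) (h2 : φ b = a) : 2 ∈ φ.cycleType := by
  refine Equiv.Perm.mem_cycleType_iff.mpr ⟨Equiv.swap a b, (Equiv.swap a b) * φ, ?_, ?_,
    isCycle_swap hab, card_support_swap hab⟩
  · rw [← mul_assoc, Equiv.swap_mul_self, one_mul]
  · intro x
    rcases eq_or_ne x a with rfl | hxa
    · right; simp [Equiv.Perm.mul_apply, h1]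
    rcases eq_or_ne x b with rfl | hxb
    · right; simp [Equiv.Perm.mul_apply, h2]
    · left; exact Equiv.swap_apply_of_ne_of_ne hxa hxb

lemma block_cases {S : Set (MPoint n)} (h : S ∈ MBlocks n ψ) :
    (∃ k, S = Ablock n k) ∨ (∃ k, S = Bblock n ψ k) := by
  rcases h with ⟨k, hk⟩ | ⟨k, hk⟩
  · exact Or.inl ⟨k, hk.symm⟩
  · exact Or.inr ⟨k, hk.symm⟩

/-- The main dichotomy: images of B-blocks are all B-blocks or all A-blocks. -/
lemma dichotomy (hn4 : 4 ≤ n) (hφ4 : n = 4 → φ ≠ 1 ∧ 2 ∉ φ.cycleType)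
    (f : MPoint n ≃ MPoint n)
    (hf : ∀ S : Set (MPoint n), S ∈ MBlocks n φ ↔ ⇑f '' S ∈ MBlocks n ψ) :
    (∀ i, ∃ k, ⇑f '' Bblock n φ i = Bblock n ψ k) ∨
    (∀ i, ∃ k, ⇑f '' Bblock n φ i = Ablock n k) := by
  have himginj : ∀ S T : Set (MPoint n), ⇑f '' S = ⇑f '' T → S = T :=
    fun S T h => Set.image_injective.mpr f.injective h
  set P : Fin n → Prop := fun i => ∃ k, ⇑f '' Bblock n φ i = Ablock n k with hP
  set Q : Fin n → Prop := fun i => ∃ k, ⇑f '' Ablock n i = Ablock n k with hQ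
  have hBtype : ∀ i, ¬ P i → ∃ k, ⇑f '' Bblock n φ i = Bblock n ψ k := by
    intro i hi
    rcases block_cases ((hf _).mp Bblock_mem) with h | h
    · exact absurd h hi
    · exact h
  have hAtype : ∀ i, ¬ Q i → ∃ k, ⇑f '' Ablock n i = Bblock n ψ k := by
    intro i hi
    rcases block_cases ((hf _).mp Ablock_mem) with h | h
    · exact absurd h hi
    · exact h
  -- the engine : no point lies on two A'-image blocks and two B'-image blocks
  have engine : ∀ (p : MPoint n) (S1 S2 S3 S4 : Set (MPoint n)), S1 ≠ S2 → S3 ≠ S4 →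
      p ∈ S1 → p ∈ S2 → p ∈ S3 → p ∈ S4 →
      (∃ k, ⇑f '' S1 = Ablock n k) → (∃ k, ⇑f '' S2 = Ablock n k) →
      (∃ k, ⇑f '' S3 = Bblock n ψ k) → (∃ k, ⇑f '' S4 = Bblock n ψ k) → False := by
    rintro p S1 S2 S3 S4 h12 h34 p1 p2 p3 p4 ⟨k1, e1⟩ ⟨k2, e2⟩ ⟨k3, e3⟩ ⟨k4, e4⟩
    have hk12 : k1 ≠ k2 := by
      rintro rfl; exact h12 (himginj _ _ (e1.trans e2.symm))
    have hk34 : k3 ≠ k4 := by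
      rintro rfl; exact h34 (himginj _ _ (e3.trans e4.symm))
    exact twoA_twoB hk12 hk34 (e1 ▸ Set.mem_image_of_mem ⇑f p1)
      (e2 ▸ Set.mem_image_of_mem ⇑f p2) (e3 ▸ Set.mem_image_of_mem ⇑f p3)
      (e4 ▸ Set.mem_image_of_mem ⇑f p4)
  -- preimages of blocks are blocks
  have hpreA : ∀ k : Fin n, ∃ S, S ∈ MBlocks n φ ∧ ⇑f '' S = Ablock n k := by
    intro k
    refine ⟨⇑f ⁻¹' (Ablock n k), ?_, Set.image_preimage_eq _ f.surjective⟩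
    rw [hf, Set.image_preimage_eq _ f.surjective]
    exact Ablock_mem
  have hpreB : ∀ k : Fin n, ∃ S, S ∈ MBlocks n φ ∧ ⇑f '' S = Bblock n ψ k := by
    intro k
    refine ⟨⇑f ⁻¹' (Bblock n ψ k), ?_, Set.image_preimage_eq _ f.surjective⟩
    rw [hf, Set.image_preimage_eq _ f.surjective]
    exact Bblock_mem
  have pigeonA : ∀ (X : Set (MPoint n)) (k k' : Fin n), k ≠ k' →
      ⇑f '' X = Ablock n k → ⇑f '' X = Ablock n k' → False :=
    fun X k k' hkk e e' => hkk (Ablock_inj_s12 (e.symm.trans e'))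
  have pigeonB : ∀ (X : Set (MPoint n)) (k k' : Fin n), k ≠ k' →
      ⇑f '' X = Bblock n ψ k → ⇑f '' X = Bblock n ψ k' → False :=
    fun X k k' hkk e e' => hkk (Bblock_inj_s12 (e.symm.trans e'))
  by_contra hcon
  push_neg at hcon
  obtain ⟨hc1, hc2⟩ := hcon
  obtain ⟨u1, hu1'⟩ := hc1
  obtain ⟨w1, hw1'⟩ := hc2
  have hPu1 : P u1 := by
    rcases block_cases ((hf _).mp Bblock_mem) with h | ⟨k, hk⟩
    · exact h
    · exact absurd hk (hu1' k)
  have hPw1 : ¬ P w1 := by rintro ⟨k, hk⟩; exact hw1' k hk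
  -- three distinct indices
  have h0n : (0 : ℕ) < n := by omega
  have h1n : (1 : ℕ) < n := by omega
  have h2n : (2 : ℕ) < n := by omega
  obtain ⟨k0, hk0v⟩ : ∃ k : Fin n, k.val = 0 := ⟨⟨0, h0n⟩, rfl⟩
  obtain ⟨k1, hk1v⟩ : ∃ k : Fin n, k.val = 1 := ⟨⟨1, h1n⟩, rfl⟩
  obtain ⟨k2, hk2v⟩ : ∃ k : Fin n, k.val = 2 := ⟨⟨2, h2n⟩, rfl⟩
  have hk01 : k0 ≠ k1 := Fin.ne_of_val_ne (by omega)
  have hk02 : k0 ≠ k2 := Fin.ne_of_val_ne (by omega)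
  have hk12 : k1 ≠ k2 := Fin.ne_of_val_ne (by omega)
  by_cases hP2 : ∃ u, u ≠ u1 ∧ P u
  · by_cases hW2 : ∃ w, w ≠ w1 ∧ ¬ P w
    · -- case (c) : at least two on each side
      obtain ⟨u2, hu2ne, hPu2⟩ := hP2
      obtain ⟨w2, hw2ne, hPw2⟩ := hW2
      have hU : ∀ j, P j → ∃ u, u ≠ j ∧ P u := by
        intro j hPj
        rcases eq_or_ne j u1 with rfl | h
        · exact ⟨u2, hu2ne, hPu2⟩
        · exact ⟨u1, h.symm, hPu1⟩
      have hW : ∀ j, ¬ P j → ∃ w, w ≠ j ∧ ¬ P w := by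
        intro j hPj
        rcases eq_or_ne j w1 with rfl | h
        · exact ⟨w2, hw2ne, hPw2⟩
        · exact ⟨w1, h.symm, hPw1⟩
      have hne_of_P : ∀ {a b : Fin n}, P a → ¬ P b → a ≠ b := by
        rintro a b hPa hPb rfl; exact hPb hPa
      -- c1a : P j → ¬ Q j
      have c1a : ∀ j, P j → ¬ Q j := by
        intro j hPj hQj
        obtain ⟨u, huj, hPu⟩ := hU j hPj
        refine engine (Sum.inr j) (Bblock n φ u) (Ablock n j) (Bblock n φ w1) (Bblock n φ w2)
          (Ne.symm (Ablock_ne_Bblock hn4)) (fun h => (hw2ne (Bblock_inj_s12 h).symm).elim) ?_ ?_ ?_ ?_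
          hPu hQj (hBtype w1 hPw1) (hBtype w2 hPw2)
        · exact mem_Bblock_inr.mpr (Ne.symm huj)
        · exact mem_Ablock_inr.mpr rfl
        · exact mem_Bblock_inr.mpr (hne_of_P hPj hPw1)
        · exact mem_Bblock_inr.mpr (hne_of_P hPj hPw2)
      -- c1b : if P j, no two other distinct members of P
      have c1b : ∀ j, P j → ∀ u u', u ≠ u' → u ≠ j → u' ≠ j → P u → P u' → False := by
        intro j hPj u u' huu huj hu'j hPu hPu'
        refine engine (Sum.inr j) (Bblock n φ u) (Bblock n φ u') (Bblock n φ w1) (Bblock n φ w2)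
          (fun h => huu (Bblock_inj_s12 h)) (fun h => (hw2ne (Bblock_inj_s12 h).symm).elim)
          (mem_Bblock_inr.mpr (Ne.symm huj)) (mem_Bblock_inr.mpr (Ne.symm hu'j))
          (mem_Bblock_inr.mpr (hne_of_P hPj hPw1)) (mem_Bblock_inr.mpr (hne_of_P hPj hPw2))
          hPu hPu' (hBtype w1 hPw1) (hBtype w2 hPw2)
      have hSB : ∀ x, P x → x = u1 ∨ x = u2 := by
        intro x hPx
        by_contra hx
        push_neg at hx
        exact c1b u1 hPu1 x u2 hx.2 hx.1 hu2ne hPx hPu2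
      -- c2a : ¬ P j → Q j
      have hu12 : u1 ≠ u2 := Ne.symm hu2ne
      have hw12 : w1 ≠ w2 := Ne.symm hw2ne
      have c2a : ∀ j, ¬ P j → Q j := by
        intro j hPj
        by_contra hQj
        obtain ⟨w, hwj, hPw⟩ := hW j hPj
        refine engine (Sum.inr j) (Bblock n φ u1) (Bblock n φ u2) (Ablock n j) (Bblock n φ w)
          (fun h => hu12 (Bblock_inj_s12 h)) (Ablock_ne_Bblock hn4)
          (mem_Bblock_inr.mpr (Ne.symm (hne_of_P hPu1 hPj)))
          (mem_Bblock_inr.mpr (Ne.symm (hne_of_P hPu2 hPj)))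
          (mem_Ablock_inr.mpr rfl) (mem_Bblock_inr.mpr (Ne.symm hwj))
          hPu1 hPu2 (hAtype j hQj) (hBtype w hPw)
      have c2b : ∀ j, ¬ P j → ∀ w w', w ≠ w' → w ≠ j → w' ≠ j → ¬ P w → ¬ P w' → False := by
        intro j hPj w w' hww hwj hw'j hPw hPw'
        exact engine (Sum.inr j) (Bblock n φ u1) (Bblock n φ u2) (Bblock n φ w) (Bblock n φ w')
          (fun h => hu12 (Bblock_inj_s12 h)) (fun h => hww (Bblock_inj_s12 h))
          (mem_Bblock_inr.mpr (Ne.symm (hne_of_P hPu1 hPj)))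
          (mem_Bblock_inr.mpr (Ne.symm (hne_of_P hPu2 hPj)))
          (mem_Bblock_inr.mpr (Ne.symm hwj)) (mem_Bblock_inr.mpr (Ne.symm hw'j))
          hPu1 hPu2 (hBtype w hPw) (hBtype w' hPw')
      have hSBc : ∀ x, ¬ P x → x = w1 ∨ x = w2 := by
        intro x hPx
        by_contra hx
        push_neg at hx
        exact c2b w1 hPw1 x w2 hx.2 hx.1 hw2ne hPx hPw2
      have hcover : ∀ x : Fin n, x = u1 ∨ x = u2 ∨ x = w1 ∨ x = w2 := by
        intro x
        by_cases hx : P x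
        · rcases hSB x hx with h | h
          · exact Or.inl h
          · exact Or.inr (Or.inl h)
        · rcases hSBc x hx with h | h
          · exact Or.inr (Or.inr (Or.inl h))
          · exact Or.inr (Or.inr (Or.inr h))
      have hn : n = 4 := by
        have hsub : (Finset.univ : Finset (Fin n)) ⊆ {u1, u2, w1, w2} := by
          intro x _
          simp only [Finset.mem_insert, Finset.mem_singleton]
          exact hcover x
        have hcard := Finset.card_le_card hsub
        have e1 := Finset.card_insert_le u1 ({u2, w1, w2} : Finset (Fin n))
        have e2 := Finset.card_insert_le u2 ({w1, w2} : Finset (Fin n))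
        have e3 := Finset.card_insert_le w1 ({w2} : Finset (Fin n))
        have e4 : ({w2} : Finset (Fin n)).card = 1 := Finset.card_singleton _
        have hu : (Finset.univ : Finset (Fin n)).card = n := by
          rw [Finset.card_univ, Fintype.card_fin]
        omega
      obtain ⟨hφ1, hφ2⟩ := hφ4 hn
      -- invariance of P under φ⁻¹
      have hinv1 : ∀ x, P x → P (φ⁻¹ x) := by
        intro x hPx
        by_contra hPt
        obtain ⟨u, hux, hPu⟩ := hU x hPx
        have hQu : ¬ Q u := c1a u hPu
        refine engine (Sum.inl x) (Ablock n w1) (Ablock n w2) (Ablock n u) (Bblock n φ (φ⁻¹ x))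
          (fun h => hw12 (Ablock_inj_s12 h)) (Ablock_ne_Bblock hn4)
          (mem_Ablock_inl.mpr (hne_of_P hPx hPw1)) (mem_Ablock_inl.mpr (hne_of_P hPx hPw2))
          (mem_Ablock_inl.mpr (Ne.symm hux)) (mem_Bblock_inl.mpr (φ.apply_symm_apply x).symm)
          (c2a w1 hPw1) (c2a w2 hPw2) (hAtype u hQu) (hBtype _ hPt)
      have hinv2 : ∀ x, ¬ P x → ¬ P (φ⁻¹ x) := by
        intro x hPx hPt
        obtain ⟨w, hwx, hPw⟩ := hW x hPx
        have hQu1 : ¬ Q u1 := c1a u1 hPu1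
        have hQu2 : ¬ Q u2 := c1a u2 hPu2
        refine engine (Sum.inl x) (Bblock n φ (φ⁻¹ x)) (Ablock n w) (Ablock n u1) (Ablock n u2)
          (fun h => (Ablock_ne_Bblock hn4 h.symm)) (fun h => hu12 (Ablock_inj_s12 h))
          (mem_Bblock_inl.mpr (φ.apply_symm_apply x).symm) (mem_Ablock_inl.mpr (Ne.symm hwx))
          (mem_Ablock_inl.mpr (Ne.symm (hne_of_P hPu1 hPx)))
          (mem_Ablock_inl.mpr (Ne.symm (hne_of_P hPu2 hPx)))
          hPt (c2a w hPw) (hAtype u1 hQu1) (hAtype u2 hQu2)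
      have hstab : ∀ x, P (φ x) ↔ P x := by
        intro x
        constructor
        · intro h
          have := hinv1 (φ x) h
          rwa [Equiv.Perm.inv_def, φ.symm_apply_apply] at this
        · intro h
          by_contra hc
          have := hinv2 (φ x) hc
          rw [Equiv.Perm.inv_def, φ.symm_apply_apply] at this
          exact this h
      -- φ fixes or swaps within {u1,u2} and {w1,w2}
      have hφu1 : φ u1 = u1 ∨ φ u1 = u2 := hSB _ ((hstab u1).mpr hPu1)
      have hφu2 : φ u2 = u1 ∨ φ u2 = u2 := hSB _ ((hstab u2).mpr hPu2)
      have hφw1 : φ w1 = w1 ∨ φ w1 = w2 := by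
        have : ¬ P (φ w1) := fun h => hPw1 ((hstab w1).mp h)
        exact hSBc _ this
      have hφw2 : φ w2 = w1 ∨ φ w2 = w2 := by
        have : ¬ P (φ w2) := fun h => hPw2 ((hstab w2).mp h)
        exact hSBc _ this
      have hfixu : φ u1 = u1 ∧ φ u2 = u2 := by
        rcases hφu1 with h1 | h1
        · refine ⟨h1, ?_⟩
          rcases hφu2 with h2 | h2
          · exact absurd (φ.injective (h1.trans h2.symm)) hu12
          · exact h2
        · rcases hφu2 with h2 | h2
          · exact absurd (two_mem_cycleType_of_swap hu12 h1 h2) hφ2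
          · exact absurd (φ.injective (h1.trans h2.symm)) hu12
      have hfixw : φ w1 = w1 ∧ φ w2 = w2 := by
        rcases hφw1 with h1 | h1
        · refine ⟨h1, ?_⟩
          rcases hφw2 with h2 | h2
          · exact absurd (φ.injective (h1.trans h2.symm)) hw12
          · exact h2
        · rcases hφw2 with h2 | h2
          · exact absurd (two_mem_cycleType_of_swap hw12 h1 h2) hφ2
          · exact absurd (φ.injective (h1.trans h2.symm)) hw12
      apply hφ1
      apply Equiv.ext
      intro x
      rcases hcover x with rfl | rfl | rfl | rfl
      · exact hfixu.1
      · exact hfixu.2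
      · exact hfixw.1
      · exact hfixw.2
    · -- case (b) : w1 is the only non-member of P
      push_neg at hW2
      have hall : ∀ w, w ≠ w1 → P w := fun w hw => hW2 w hw
      have hQall : ∀ j, j ≠ w1 → Q j := by
        intro j hj
        by_contra hQj
        obtain ⟨c, d, hcd, hcj, hcw, hdj, hdw⟩ := exists_two_ne hn4 j w1
        refine engine (Sum.inr j) (Bblock n φ c) (Bblock n φ d) (Ablock n j) (Bblock n φ w1)
          (fun h => hcd (Bblock_inj_s12 h)) (Ablock_ne_Bblock hn4)
          (mem_Bblock_inr.mpr (Ne.symm hcj)) (mem_Bblock_inr.mpr (Ne.symm hdj))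
          (mem_Ablock_inr.mpr rfl) (mem_Bblock_inr.mpr hj)
          (hall c hcw) (hall d hdw) (hAtype j hQj) (hBtype w1 hPw1)
      -- pigeonhole on B'-blocks
      have hform : ∀ k : Fin n, ⇑f '' Ablock n w1 = Bblock n ψ k ∨
          ⇑f '' Bblock n φ w1 = Bblock n ψ k := by
        intro k
        obtain ⟨S, hS, hSk⟩ := hpreB k
        rcases hS with ⟨m, hm⟩ | ⟨m, hm⟩
        · subst hm
          left
          have hm1 : m = w1 := by
            by_contra hmw
            obtain ⟨k', hk'⟩ := hQall m hmw
            exact Ablock_ne_Bblock hn4 (hk'.symm.trans hSk)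
          rwa [hm1] at hSk
        · subst hm
          right
          have hm1 : m = w1 := by
            by_contra hmw
            obtain ⟨k', hk'⟩ := hall m hmw
            exact Ablock_ne_Bblock hn4 (hk'.symm.trans hSk)
          rwa [hm1] at hSk
      rcases hform k0 with h0 | h0 <;> rcases hform k1 with h1 | h1 <;>
        rcases hform k2 with h2 | h2
      · exact pigeonB _ _ _ hk01 h0 h1
      · exact pigeonB _ _ _ hk01 h0 h1
      · exact pigeonB _ _ _ hk02 h0 h2
      · exact pigeonB _ _ _ hk12 h1 h2
      · exact pigeonB _ _ _ hk12 h1 h2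
      · exact pigeonB _ _ _ hk02 h0 h2
      · exact pigeonB _ _ _ hk01 h0 h1
      · exact pigeonB _ _ _ hk01 h0 h1
  · -- case (a) : u1 is the only member of P
    push_neg at hP2
    have hallB : ∀ u, u ≠ u1 → ∃ k, ⇑f '' Bblock n φ u = Bblock n ψ k :=
      fun u hu => hBtype u (hP2 u hu)
    have hQsub : ∀ j, j ≠ u1 → ¬ Q j := by
      intro j hj hQj
      obtain ⟨c, d, hcd, hcj, hcu, hdj, hdu⟩ := exists_two_ne hn4 j u1
      refine engine (Sum.inr j) (Bblock n φ u1) (Ablock n j) (Bblock n φ c) (Bblock n φ d)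
        (Ne.symm (Ablock_ne_Bblock hn4)) (fun h => hcd (Bblock_inj_s12 h))
        (mem_Bblock_inr.mpr hj) (mem_Ablock_inr.mpr rfl)
        (mem_Bblock_inr.mpr (Ne.symm hcj)) (mem_Bblock_inr.mpr (Ne.symm hdj))
        hPu1 hQj (hallB c hcu) (hallB d hdu)
    have hform : ∀ k : Fin n, ⇑f '' Ablock n u1 = Ablock n k ∨
        ⇑f '' Bblock n φ u1 = Ablock n k := by
      intro k
      obtain ⟨S, hS, hSk⟩ := hpreA k
      rcases hS with ⟨m, hm⟩ | ⟨m, hm⟩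
      · subst hm
        left
        have hm1 : m = u1 := by
          by_contra hmw
          exact hQsub m hmw ⟨k, hSk⟩
        rwa [hm1] at hSk
      · subst hm
        right
        have hm1 : m = u1 := by
          by_contra hmw
          obtain ⟨k', hk'⟩ := hallB m hmw
          exact Ablock_ne_Bblock hn4 (hSk.symm.trans hk')
        rwa [hm1] at hSk
    rcases hform k0 with h0 | h0 <;> rcases hform k1 with h1 | h1 <;>
      rcases hform k2 with h2 | h2
    · exact pigeonA _ _ _ hk01 h0 h1
    · exact pigeonA _ _ _ hk01 h0 h1
    · exact pigeonA _ _ _ hk02 h0 h2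
    · exact pigeonA _ _ _ hk12 h1 h2
    · exact pigeonA _ _ _ hk12 h1 h2
    · exact pigeonA _ _ _ hk02 h0 h2
    · exact pigeonA _ _ _ hk01 h0 h1
    · exact pigeonA _ _ _ hk01 h0 h1

end main

/-- Form of an isomorphism f : 𝔐_{(n,φ)} → 𝔐_{(n,ψ)}, when n = 4 and φ,ψ ≠ id contain
no 2-cycles, or n ≥ 5: there is α ∈ Sₙ with f(B_i) = B_{α(i)} for all i or
f(B_i) = A_{α(i)} for all i, the action on the remaining points/blocks is determined as
stated, and α ∘ φ = ψ ∘ α. -/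
theorem stmt12 (n : ℕ) (φ ψ : Equiv.Perm (Fin n))
    (hcase : (n = 4 ∧ φ ≠ 1 ∧ ψ ≠ 1 ∧ 2 ∉ φ.cycleType ∧ 2 ∉ ψ.cycleType) ∨ 5 ≤ n)
    (f : MPoint n ≃ MPoint n)
    (hf : ∀ S : Set (MPoint n), S ∈ MBlocks n φ ↔ ⇑f '' S ∈ MBlocks n ψ) :
    ∃ α : Equiv.Perm (Fin n),
      ((∀ i, ⇑f '' Bblock n φ i = Bblock n ψ (α i)) ∨
       (∀ i, ⇑f '' Bblock n φ i = Ablock n (α i))) ∧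
      ((∀ i, ⇑f '' Bblock n φ i = Bblock n ψ (α i)) →
        ∀ i, f (Sum.inr i) = Sum.inr (α i) ∧
          ⇑f '' Ablock n i = Ablock n (α i) ∧
          f (Sum.inl i) = Sum.inl (α i)) ∧
      ((∀ i, ⇑f '' Bblock n φ i = Ablock n (α i)) →
        ∀ i, f (Sum.inr i) = Sum.inl (α i) ∧
          ⇑f '' Ablock n i = Bblock n ψ (ψ⁻¹ (α i)) ∧
          f (Sum.inl i) = Sum.inr (ψ⁻¹ (α i))) ∧
      α * φ = ψ * α := by
  have hn4 : 4 ≤ n := by rcases hcase with ⟨h, -⟩ | h <;> omega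
  have hφ4 : n = 4 → φ ≠ 1 ∧ 2 ∉ φ.cycleType := by
    rcases hcase with ⟨h1, h2, h3, h4, h5⟩ | h
    · exact fun _ => ⟨h2, h4⟩
    · intro h'; omega
  have himginj : ∀ S T : Set (MPoint n), ⇑f '' S = ⇑f '' T → S = T :=
    fun S T h => Set.image_injective.mpr f.injective h
  have h0n : (0 : ℕ) < n := by omega
  rcases dichotomy hn4 hφ4 f hf with hB | hB
  · -- Case 1 : B-blocks map to B-blocks
    choose β hβ using hB
    have hβinj : Function.Injective β := by
      intro i j h
      exact Bblock_inj_s12 (himginj _ _ ((hβ i).trans (h ▸ (hβ j).symm)))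
    have hβbij : Function.Bijective β := Finite.injective_iff_bijective.mp hβinj
    let α : Equiv.Perm (Fin n) := Equiv.ofBijective β hβbij
    have hα : ∀ i, α i = β i := fun i => rfl
    have hfr : ∀ i, f (Sum.inr i) = Sum.inr (β i) := by
      intro i
      obtain ⟨c, d, hcd, hci, -, hdi, -⟩ := exists_two_ne hn4 i i
      have h1 : f (Sum.inr i) ∈ Bblock n ψ (β c) :=
        hβ c ▸ Set.mem_image_of_mem ⇑f (mem_Bblock_inr.mpr (Ne.symm hci))
      have h2 : f (Sum.inr i) ∈ Bblock n ψ (β d) :=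
        hβ d ▸ Set.mem_image_of_mem ⇑f (mem_Bblock_inr.mpr (Ne.symm hdi))
      obtain ⟨x, hx, -, -⟩ := mem_two_B (fun h => hcd (hβinj h)) h1 h2
      have hall : ∀ j, j ≠ i → x ≠ β j := by
        intro j hj
        have := hβ j ▸ Set.mem_image_of_mem ⇑f (mem_Bblock_inr.mpr (fun h => hj (h ▸ rfl) : i ≠ j))
        rw [hx] at this
        exact mem_Bblock_inr.mp this
      obtain ⟨j, hjx⟩ := hβbij.2 x
      have hji : j = i := by
        by_contra h
        exact hall j h hjx.symm
      rw [hx, ← hjx, hji]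
    have hfA : ∀ i, ⇑f '' Ablock n i = Ablock n (β i) := by
      intro i
      rcases block_cases ((hf _).mp Ablock_mem) with ⟨k, hk⟩ | ⟨k, hk⟩
      · have : f (Sum.inr i) ∈ Ablock n k :=
          hk ▸ Set.mem_image_of_mem ⇑f (mem_Ablock_inr.mpr rfl)
        rw [hfr i] at this
        rw [hk, mem_Ablock_inr.mp this]
      · exfalso
        obtain ⟨j, hj⟩ := hβbij.2 k
        have : Ablock n i = Bblock n φ j := himginj _ _ (hk.trans (hj ▸ (hβ j).symm))
        exact Ablock_ne_Bblock hn4 this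
    have hfl : ∀ i, f (Sum.inl i) = Sum.inl (β i) := by
      intro i
      obtain ⟨c, d, hcd, hci, -, hdi, -⟩ := exists_two_ne hn4 i i
      have h1 : f (Sum.inl i) ∈ Ablock n (β c) :=
        hfA c ▸ Set.mem_image_of_mem ⇑f (mem_Ablock_inl.mpr (fun h => hci (h ▸ rfl) : i ≠ c))
      have h2 : f (Sum.inl i) ∈ Ablock n (β d) :=
        hfA d ▸ Set.mem_image_of_mem ⇑f (mem_Ablock_inl.mpr (fun h => hdi (h ▸ rfl) : i ≠ d))
      obtain ⟨x, hx, -, -⟩ := mem_two_A (fun h => hcd (hβinj h)) h1 h2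
      have hall : ∀ j, j ≠ i → x ≠ β j := by
        intro j hj
        have := hfA j ▸ Set.mem_image_of_mem ⇑f (mem_Ablock_inl.mpr (fun h => hj (h ▸ rfl) : i ≠ j))
        rw [hx] at this
        exact mem_Ablock_inl.mp this
      obtain ⟨j, hjx⟩ := hβbij.2 x
      have hji : j = i := by
        by_contra h
        exact hall j h hjx.symm
      rw [hx, ← hjx, hji]
    have hconj : α * φ = ψ * α := by
      apply Equiv.ext
      intro i
      rw [Equiv.Perm.mul_apply, Equiv.Perm.mul_apply, hα, hα]
      have h1 : f (Sum.inl (φ i)) ∈ Bblock n ψ (β i) :=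
        hβ i ▸ Set.mem_image_of_mem ⇑f (mem_Bblock_inl.mpr rfl)
      rw [hfl (φ i)] at h1
      exact mem_Bblock_inl.mp h1
    refine ⟨α, Or.inl (fun i => hβ i), fun _ i => ⟨hfr i, hfA i, hfl i⟩, ?_, hconj⟩
    intro h2
    exfalso
    have := (h2 ⟨0, h0n⟩).symm.trans (hβ ⟨0, h0n⟩)
    exact Ablock_ne_Bblock hn4 this
  · -- Case 2 : B-blocks map to A-blocks
    choose β hβ using hB
    have hβinj : Function.Injective β := by
      intro i j h
      exact Bblock_inj_s12 (himginj _ _ ((hβ i).trans (h ▸ (hβ j).symm)))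
    have hβbij : Function.Bijective β := Finite.injective_iff_bijective.mp hβinj
    let α : Equiv.Perm (Fin n) := Equiv.ofBijective β hβbij
    have hα : ∀ i, α i = β i := fun i => rfl
    have hfr : ∀ i, f (Sum.inr i) = Sum.inl (β i) := by
      intro i
      obtain ⟨c, d, hcd, hci, -, hdi, -⟩ := exists_two_ne hn4 i i
      have h1 : f (Sum.inr i) ∈ Ablock n (β c) :=
        hβ c ▸ Set.mem_image_of_mem ⇑f (mem_Bblock_inr.mpr (Ne.symm hci))
      have h2 : f (Sum.inr i) ∈ Ablock n (β d) :=
        hβ d ▸ Set.mem_image_of_mem ⇑f (mem_Bblock_inr.mpr (Ne.symm hdi))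
      obtain ⟨x, hx, -, -⟩ := mem_two_A (fun h => hcd (hβinj h)) h1 h2
      have hall : ∀ j, j ≠ i → x ≠ β j := by
        intro j hj
        have := hβ j ▸ Set.mem_image_of_mem ⇑f (mem_Bblock_inr.mpr (fun h => hj (h ▸ rfl) : i ≠ j))
        rw [hx] at this
        exact mem_Ablock_inl.mp this
      obtain ⟨j, hjx⟩ := hβbij.2 x
      have hji : j = i := by
        by_contra h
        exact hall j h hjx.symm
      rw [hx, ← hjx, hji]
    have hfA : ∀ i, ⇑f '' Ablock n i = Bblock n ψ (ψ⁻¹ (β i)) := by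
      intro i
      rcases block_cases ((hf _).mp Ablock_mem) with ⟨k, hk⟩ | ⟨k, hk⟩
      · exfalso
        obtain ⟨j, hj⟩ := hβbij.2 k
        have : Ablock n i = Bblock n φ j := himginj _ _ (hk.trans (hj ▸ (hβ j).symm))
        exact Ablock_ne_Bblock hn4 this
      · have : f (Sum.inr i) ∈ Bblock n ψ k :=
          hk ▸ Set.mem_image_of_mem ⇑f (mem_Ablock_inr.mpr rfl)
        rw [hfr i] at this
        have hbk : β i = ψ k := mem_Bblock_inl.mp this
        have : ψ⁻¹ (β i) = k := by rw [hbk, Equiv.Perm.inv_def, Equiv.symm_apply_apply]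
        rw [hk, this]
    have hfl : ∀ i, f (Sum.inl i) = Sum.inr (ψ⁻¹ (β i)) := by
      intro i
      obtain ⟨c, d, hcd, hci, -, hdi, -⟩ := exists_two_ne hn4 i i
      have h1 : f (Sum.inl i) ∈ Bblock n ψ (ψ⁻¹ (β c)) :=
        hfA c ▸ Set.mem_image_of_mem ⇑f (mem_Ablock_inl.mpr (fun h => hci (h ▸ rfl) : i ≠ c))
      have h2 : f (Sum.inl i) ∈ Bblock n ψ (ψ⁻¹ (β d)) :=
        hfA d ▸ Set.mem_image_of_mem ⇑f (mem_Ablock_inl.mpr (fun h => hdi (h ▸ rfl) : i ≠ d))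
      have hne : ψ⁻¹ (β c) ≠ ψ⁻¹ (β d) := fun h => hcd (hβinj (ψ⁻¹.injective h))
      obtain ⟨x, hx, -, -⟩ := mem_two_B hne h1 h2
      have hall : ∀ j, j ≠ i → x ≠ ψ⁻¹ (β j) := by
        intro j hj
        have := hfA j ▸ Set.mem_image_of_mem ⇑f (mem_Ablock_inl.mpr (fun h => hj (h ▸ rfl) : i ≠ j))
        rw [hx] at this
        exact mem_Bblock_inr.mp this
      obtain ⟨j, hjx⟩ := hβbij.2 (ψ x)
      have hjx' : ψ⁻¹ (β j) = x := by rw [hjx, Equiv.Perm.inv_def, Equiv.symm_apply_apply]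
      have hji : j = i := by
        by_contra h
        exact hall j h hjx'.symm
      rw [hx, ← hjx', hji]
    have hconj : α * φ = ψ * α := by
      apply Equiv.ext
      intro i
      rw [Equiv.Perm.mul_apply, Equiv.Perm.mul_apply, hα, hα]
      have h1 : f (Sum.inl (φ i)) ∈ Ablock n (β i) :=
        hβ i ▸ Set.mem_image_of_mem ⇑f (mem_Bblock_inl.mpr rfl)
      rw [hfl (φ i)] at h1
      have := mem_Ablock_inr.mp h1
      rw [← this, Equiv.Perm.inv_def, Equiv.apply_symm_apply]
    refine ⟨α, Or.inr (fun i => hβ i), ?_, fun _ i => ⟨hfr i, hfA i, hfl i⟩, hconj⟩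
    intro h2
    exfalso
    have := (hβ ⟨0, h0n⟩).symm.trans (h2 ⟨0, h0n⟩)
    exact Ablock_ne_Bblock hn4 this
end
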